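/- Let u⁺, u⁻ ∈ ℝ, ν = (ν_t, ν_x) a unit vector in ℝ², and define the pure jump ψ(t,x) := u⁻ if (t,x)·ν < 0 and u⁺ if (t,x)·ν > 0. Let Δ : ℝ × ℝ → [0,∞) with Δ(v,v) = 0 for all v and Δ symmetric. Then for any 0 < |h| ≤ r: 2r·|ν_x|·Δ(u⁺,u⁻) ≤ (2/|h|)·∬_{B_r} Δ(ψ(t,x+h), ψ(t,x)) dx dt, where B_r is the open disc of radius r centered at the origin. -/

import Mathlib

open MeasureTheory Set

private noncomputable def Lmap (νt νx : ℝ) : (ℝ × ℝ) →ₗ[ℝ] (ℝ × ℝ) where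
  toFun w := (w.1 * νt + w.2 * νx, w.1 * νx - w.2 * νt)
  map_add' a b := by simp [Prod.ext_iff]; constructor <;> ring
  map_smul' c a := by simp [Prod.ext_iff]; constructor <;> ring

private theorem Lmap_det (νt νx : ℝ) : LinearMap.det (Lmap νt νx) = -(νt^2+νx^2) := by
  rw [← LinearMap.det_toMatrix (Module.Basis.finTwoProd ℝ), Matrix.det_fin_two]
  simp [LinearMap.toMatrix_apply, Lmap, Module.Basis.finTwoProd]
  ring

private theorem aux_len (d c2 ba r : ℝ) (hd : 0 ≤ d) (hdr : d ≤ r) (hr : 0 < r)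
    (h2c2 : r ≤ 2*c2) (hc2sq : 2*c2^2 = r^2) (hc2pos : 0 < c2)
    (hba0 : 0 ≤ ba) (hmin : min d c2 ≤ ba) : r * d ≤ ba * (2*c2) := by
  rcases le_total d c2 with hm | hm
  · have h1 : d ≤ ba := by rwa [min_eq_left hm] at hmin
    nlinarith [mul_le_mul h1 h2c2 hr.le hba0]
  · have h1 : c2 ≤ ba := by rwa [min_eq_right hm] at hmin
    nlinarith [mul_le_mul_of_nonneg_right h1 (by linarith : (0:ℝ) ≤ 2*c2),
      mul_le_mul_of_nonneg_left hdr hr.le]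

set_option maxHeartbeats 1000000 in
/-- Elementary estimate for a pure jump: for the two-valued function `ψ` jumping from `u⁻` to
`u⁺` across the line through the origin with unit normal `ν`, and any symmetric nonnegative
cost `Δ` vanishing on the diagonal, for `0 < |h| ≤ r`,
`2r·|ν_x|·Δ(u⁺,u⁻) ≤ (2/|h|)·∬_{B_r} Δ(ψ(t,x+h), ψ(t,x)) dx dt`. -/
theorem stmt17 (up um : ℝ) (νt νx : ℝ) (hν : νt ^ 2 + νx ^ 2 = 1)
    (Δ : ℝ → ℝ → ℝ) (hΔ0 : ∀ v w, 0 ≤ Δ v w) (hΔsymm : ∀ v w, Δ v w = Δ w v)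
    (hΔdiag : ∀ v, Δ v v = 0)
    (h r : ℝ) (hh : h ≠ 0) (hhr : |h| ≤ r) :
    2 * r * |νx| * Δ up um
      ≤ (2 / |h|) *
        ∫ w in {w : ℝ × ℝ | w.1 ^ 2 + w.2 ^ 2 < r ^ 2},
          Δ (if w.1 * νt + (w.2 + h) * νx < 0 then um else up)
            (if w.1 * νt + w.2 * νx < 0 then um else up) := by
  have habs : 0 < |h| := abs_pos.2 hh
  have hr : 0 < r := lt_of_lt_of_le habs hhr
  have hc : 0 ≤ Δ up um := hΔ0 up um
  have hνx1 : |νx| ≤ 1 := by nlinarith [sq_nonneg νt, sq_abs νx, abs_nonneg νx]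
  set c : ℝ := Δ up um with hcdef
  set A : ℝ := -(h*νx) with hA
  set B : Set (ℝ×ℝ) := {w : ℝ × ℝ | w.1 ^ 2 + w.2 ^ 2 < r ^ 2} with hBdef
  set T : Set (ℝ×ℝ) := {w : ℝ×ℝ | min 0 A ≤ w.1*νt + w.2*νx ∧ w.1*νt + w.2*νx < max 0 A}
    with hTdef
  -- key logical equivalence
  have key : ∀ s : ℝ, (¬((s + h*νx < 0) ↔ (s < 0))) ↔ (min 0 A ≤ s ∧ s < max 0 A) := by
    intro s
    constructor
    · intro hne
      by_cases h1 : s + h*νx < 0 <;> by_cases h2 : s < 0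
      · exact absurd (iff_of_true h1 h2) hne
      · push_neg at h2
        exact ⟨le_trans (min_le_left _ _) h2,
          lt_of_lt_of_le (by rw [hA]; linarith) (le_max_right _ _)⟩
      · push_neg at h1
        exact ⟨le_trans (min_le_right _ _) (by rw [hA]; linarith),
          lt_of_lt_of_le h2 (le_max_left _ _)⟩
      · exact absurd (iff_of_false h1 h2) hne
    · rintro ⟨h1, h2⟩ hiff
      rcases lt_or_ge s 0 with hs | hs
      · have hx := hiff.2 hs
        have : s < min 0 A := lt_min hs (by rw [hA]; linarith)
        linarith
      · have hx : ¬(s + h*νx < 0) := fun hcc => absurd (hiff.1 hcc) (not_lt.2 hs)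
        push_neg at hx
        have : max 0 A ≤ s := max_le hs (by rw [hA]; linarith)
        linarith
  -- pointwise identity of the integrand with an indicator
  have hpt : ∀ w : ℝ×ℝ,
      Δ (if w.1 * νt + (w.2 + h) * νx < 0 then um else up)
        (if w.1 * νt + w.2 * νx < 0 then um else up) = T.indicator (fun _ => c) w := by
    intro w
    have he : w.1 * νt + (w.2 + h) * νx = (w.1*νt + w.2*νx) + h*νx := by ring
    rw [he]
    by_cases h1 : (w.1*νt + w.2*νx) + h*νx < 0 <;> by_cases h2 : w.1*νt + w.2*νx < 0
    · have hmem : w ∉ T := fun hw => ((key _).2 hw) (iff_of_true h1 h2)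
      rw [if_pos h1, if_pos h2, hΔdiag, Set.indicator_of_notMem hmem]
    · have hmem : w ∈ T := (key _).1 (fun hiff => h2 (hiff.1 h1))
      rw [if_pos h1, if_neg h2, Set.indicator_of_mem hmem, hcdef]
      exact hΔsymm um up
    · have hmem : w ∈ T := (key _).1 (fun hiff => h1 (hiff.2 h2))
      rw [if_neg h1, if_pos h2, Set.indicator_of_mem hmem]
    · have hmem : w ∉ T := fun hw => ((key _).2 hw) (iff_of_false h1 h2)
      rw [if_neg h1, if_neg h2, hΔdiag, Set.indicator_of_notMem hmem]
  have hfm : Measurable fun w : ℝ×ℝ => w.1*νt + w.2*νx := by fun_prop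
  have hBmeas : MeasurableSet B :=
    measurableSet_lt (by fun_prop) measurable_const
  have hTmeas : MeasurableSet T :=
    (measurableSet_le measurable_const hfm).inter (measurableSet_lt hfm measurable_const)
  -- rewrite the integral
  have hint : (∫ w in B,
      Δ (if w.1 * νt + (w.2 + h) * νx < 0 then um else up)
        (if w.1 * νt + w.2 * νx < 0 then um else up))
      = (volume (B ∩ T)).toReal * c := by
    rw [setIntegral_congr_fun hBmeas (fun w _ => hpt w),
      setIntegral_indicator hTmeas, setIntegral_const, smul_eq_mul, measureReal_def]
  -- geometry: lower bound on the volume of B ∩ T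
  have hsqrt2 : (Real.sqrt 2)^2 = 2 := Real.sq_sqrt (by norm_num)
  have hs2pos : 0 < Real.sqrt 2 := by positivity
  have hs2le : Real.sqrt 2 ≤ 2 := by nlinarith
  set c2 : ℝ := r / Real.sqrt 2 with hc2
  have hc2pos : 0 < c2 := by positivity
  have hc2sq : 2*c2^2 = r^2 := by
    rw [hc2, div_pow, hsqrt2]; ring
  have h2c2 : r ≤ 2*c2 := by
    have he : 2*c2 = 2*r/Real.sqrt 2 := by rw [hc2]; ring
    rw [he, le_div_iff₀ hs2pos]; nlinarith
  set a' : ℝ := max (min 0 A) (-c2) with ha'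
  set b' : ℝ := min (max 0 A) c2 with hb'
  set R : Set (ℝ×ℝ) := (Lmap νt νx) ⁻¹' ((Ico a' b') ×ˢ (Ioo (-c2) c2)) with hR
  have hRsub : R ⊆ B ∩ T := by
    rintro w hw
    simp only [hR, mem_preimage, Lmap, LinearMap.coe_mk, AddHom.coe_mk, mem_prod,
      mem_Ico, mem_Ioo] at hw
    obtain ⟨⟨ha1, ha2⟩, hb1, hb2⟩ := hw
    have hf1 : -c2 ≤ w.1*νt + w.2*νx := le_trans (le_max_right _ _) ha1
    have hf2 : w.1*νt + w.2*νx < c2 := lt_of_lt_of_le ha2 (min_le_right _ _)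
    constructor
    · show w.1^2 + w.2^2 < r^2
      have hid : (w.1*νt+w.2*νx)^2 + (w.1*νx - w.2*νt)^2 = (w.1^2+w.2^2)*(νt^2+νx^2) := by
        ring
      rw [hν, mul_one] at hid
      nlinarith
    · exact ⟨le_trans (le_max_left _ _) ha1, lt_of_lt_of_le ha2 (min_le_left _ _)⟩
  have hdet : LinearMap.det (Lmap νt νx) = -1 := by rw [Lmap_det, hν]
  have hvolR : volume R = ENNReal.ofReal (b'-a') * ENNReal.ofReal (2*c2) := by
    rw [hR, Measure.addHaar_preimage_linearMap volume (by rw [hdet]; norm_num), hdet,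
      Measure.volume_eq_prod, Measure.prod_prod, Real.volume_Ico, Real.volume_Ioo]
    norm_num
    congr 1
    rw [← two_mul, ENNReal.ofReal_mul (by norm_num : (0:ℝ) ≤ 2), ENNReal.ofReal_ofNat]
  -- length of the interval
  have hmin0 : min 0 A ≤ 0 := min_le_left _ _
  have hmax0 : 0 ≤ max 0 A := le_max_left _ _
  have habsA : max 0 A - min 0 A = |h*νx| := by
    rw [max_sub_min_eq_abs]
    simp [hA, sub_zero, abs_neg]
  have hb'a' : min (|h*νx|) c2 ≤ b' - a' := by
    rw [ha', hb']
    rcases min_cases (max 0 A) c2 with ⟨e1,l1⟩|⟨e1,l1⟩ <;>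
      rcases max_cases (min 0 A) (-c2) with ⟨e2,l2⟩|⟨e2,l2⟩ <;>
      rcases min_cases (abs (h*νx)) c2 with ⟨e3,l3⟩|⟨e3,l3⟩ <;>
      rw [e1, e2, e3] <;> linarith
  have hba0 : 0 ≤ b' - a' := le_trans (le_min (abs_nonneg _) hc2pos.le) hb'a'
  have hδr : |h| * |νx| ≤ r :=
    le_trans (by nlinarith [abs_nonneg h, abs_nonneg νx]) hhr
  have hfinal_real : r * (|h| * |νx|) ≤ (b'-a') * (2*c2) := by
    have hδ : |h * νx| = |h| * |νx| := abs_mul h νx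
    rw [hδ] at hb'a'
    exact aux_len _ _ _ _ (mul_nonneg (abs_nonneg h) (abs_nonneg νx)) hδr hr h2c2 hc2sq
      hc2pos hba0 hb'a'
  have hvol_lb : ENNReal.ofReal (r * (|h| * |νx|)) ≤ volume (B ∩ T) := by
    calc ENNReal.ofReal (r * (|h| * |νx|)) ≤ ENNReal.ofReal ((b'-a')*(2*c2)) :=
          ENNReal.ofReal_le_ofReal hfinal_real
      _ = volume R := by rw [hvolR, ENNReal.ofReal_mul hba0]
      _ ≤ volume (B ∩ T) := measure_mono hRsub
  have hfin : volume (B ∩ T) ≠ ⊤ := by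
    have hsub : B ∩ T ⊆ (Ioo (-r) r) ×ˢ (Ioo (-r) r) := by
      rintro w ⟨hwB, -⟩
      have hw : w.1^2 + w.2^2 < r^2 := hwB
      simp only [mem_prod, mem_Ioo]
      refine ⟨⟨?_, ?_⟩, ?_, ?_⟩ <;>
        nlinarith [sq_nonneg (w.1 - r), sq_nonneg (w.1 + r), sq_nonneg (w.2 - r),
          sq_nonneg (w.2 + r), sq_nonneg w.1, sq_nonneg w.2]
    have hft : volume ((Ioo (-r) r) ×ˢ (Ioo (-r) r) : Set (ℝ×ℝ)) ≠ ⊤ := by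
      rw [Measure.volume_eq_prod, Measure.prod_prod, Real.volume_Ioo]
      exact ENNReal.mul_ne_top ENNReal.ofReal_ne_top ENNReal.ofReal_ne_top
    exact ne_top_of_le_ne_top hft (measure_mono hsub)
  have hVr : r * (|h| * |νx|) ≤ (volume (B ∩ T)).toReal :=
    (ENNReal.ofReal_le_iff_le_toReal hfin).1 hvol_lb
  rw [hint, div_mul_eq_mul_div, le_div_iff₀ habs]
  nlinarith [mul_le_mul_of_nonneg_right hVr hc]
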